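/- Let u solve the self-expander ODE with n ≥ 3, u(0) = C > 0, u'(0) = 0, and define α(y) = arctan(u(y)/y) for y > 0. Then every critical point of α is a strict local minimum: at any y > 0 with y·u'(y) = u(y), one has u''(y) > 0 and α''(y) = y·u''(y)/(u(y)² + y²) > 0. -/

import Mathlib

open Set Filter Topology Real

/-- For a solution of the self-expander ODE with `n ≥ 3`, `u(0)=C>0`, `u'(0)=0`,
the angle function `α(y) = arctan(u(y)/y)` has only strict local minima as
critical points: if `y·u'(y) = u(y)` at some `y > 0`, then `u''(y) > 0` and
`α''(y) = y·u''(y)/(u(y)²+y²) > 0`. -/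
theorem selfexpander_angle_critical_points_strict_local_min
    (n : ℕ) (hn : 3 ≤ n) (C : ℝ) (hC : 0 < C) (u u' u'' α' α'' : ℝ → ℝ)
    (hpos : ∀ y ∈ Ici (0:ℝ), 0 < u y)
    (hd1 : ∀ y ∈ Ici (0:ℝ), HasDerivWithinAt u (u' y) (Ici 0) y)
    (hd2 : ∀ y ∈ Ici (0:ℝ), HasDerivWithinAt u' (u'' y) (Ici 0) y)
    (hODE : ∀ y ∈ Ici (0:ℝ),
      u'' y = (1 + (u' y)^2) * ((u y - u' y * y)/2 + ((n : ℝ) - 2) / u y))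
    (hu0 : u 0 = C) (hu'0 : u' 0 = 0)
    (hA1 : ∀ y : ℝ, 0 < y → HasDerivAt (fun z => Real.arctan (u z / z)) (α' y) y)
    (hA1' : ∀ y : ℝ, 0 < y → α' y = (y * u' y - u y) / ((u y)^2 + y^2))
    (hA2 : ∀ y : ℝ, 0 < y → HasDerivAt α' (α'' y) y) :
    ∀ y : ℝ, 0 < y → y * u' y = u y →
      0 < u'' y ∧
      α'' y = y * u'' y / ((u y)^2 + y^2) ∧
      0 < α'' y ∧
      ∀ᶠ z in 𝓝[≠] y, Real.arctan (u y / y) < Real.arctan (u z / z) := by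
  intro y hy hcrit
  have hy0 : y ∈ Ici (0:ℝ) := le_of_lt hy
  have huy : 0 < u y := hpos y hy0
  have hD0 : (0:ℝ) < (u y)^2 + y^2 := by positivity
  -- u'' y > 0
  have hupos : 0 < u'' y := by
    rw [hODE y hy0]
    have hz : (u y - u' y * y)/2 = 0 := by
      have h := hcrit
      rw [mul_comm] at h
      rw [h]; ring
    rw [hz, zero_add]
    have hn2 : (0:ℝ) < (n:ℝ) - 2 := by
      have : (3:ℝ) ≤ n := by exact_mod_cast hn
      linarith
    positivity
  -- derivatives at y
  have hyI : Ici (0:ℝ) ∈ 𝓝 y := Ici_mem_nhds hy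
  have hu : HasDerivAt u (u' y) y := (hd1 y hy0).hasDerivAt hyI
  have hu'd : HasDerivAt u' (u'' y) y := (hd2 y hy0).hasDerivAt hyI
  have hN : HasDerivAt (fun z => z * u' z - u z) (1 * u' y + y * u'' y - u' y) y :=
    ((hasDerivAt_id y).mul hu'd).sub hu
  have hD : HasDerivAt (fun z => (u z)^2 + z^2)
      ((2:ℕ) * u y ^ 1 * u' y + (2:ℕ) * y ^ 1 * 1) y :=
    (hu.pow 2).add ((hasDerivAt_id y).pow 2)
  have hg := hN.div hD (ne_of_gt hD0)
  have heq : α' =ᶠ[𝓝 y] fun z => (z * u' z - u z)/((u z)^2 + z^2) := by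
    filter_upwards [Ioi_mem_nhds hy] with z hz
    exact hA1' z hz
  have hα : HasDerivAt α'
      (((1 * u' y + y * u'' y - u' y) * ((u y)^2 + y^2)
        - (y * u' y - u y) * ((2:ℕ) * u y ^ 1 * u' y + (2:ℕ) * y ^ 1 * 1))
        / ((u y)^2 + y^2)^2) y := hg.congr_of_eventuallyEq heq
  have hα''eq : α'' y = y * u'' y / ((u y)^2 + y^2) := by
    rw [(hA2 y hy).unique hα, hcrit, sub_self, zero_mul, sub_zero]
    field_simp
    ring
  have hα''pos : 0 < α'' y := by
    rw [hα''eq]; positivity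
  refine ⟨hupos, hα''eq, hα''pos, ?_⟩
  -- strict local min
  have hα'y : α' y = 0 := by
    rw [hA1' y hy, hcrit, sub_self, zero_div]
  have hslope := hasDerivAt_iff_tendsto_slope.mp (hA2 y hy)
  have hev : ∀ᶠ z in 𝓝[≠] y, 0 < slope α' y z :=
    hslope.eventually (eventually_gt_nhds hα''pos)
  -- right side
  have hright : ∀ᶠ z in 𝓝[>] y, Real.arctan (u y / y) < Real.arctan (u z / z) := by
    have hev' : ∀ᶠ z in 𝓝[>] y, 0 < α' z := by
      have := hev.filter_mono (nhdsWithin_mono y (fun z hz => ne_of_gt hz : Ioi y ⊆ {y}ᶜ))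
      filter_upwards [this, self_mem_nhdsWithin] with z hz hz'
      have hz'' : 0 < (α' z - α' y) / (z - y) := by
        rw [slope_def_field] at hz
        simpa [div_eq_mul_inv] using hz
      rw [hα'y, sub_zero] at hz''
      have hzy : 0 < z - y := sub_pos.mpr hz'
      rcases div_pos_iff.mp hz'' with ⟨h, _⟩ | ⟨_, h⟩
      · exact h
      · linarith
    obtain ⟨b, hb, hIoo⟩ := (nhdsGT_basis y).eventually_iff.mp hev'
    rw [(nhdsGT_basis y).eventually_iff]
    refine ⟨b, hb, fun z hz => ?_⟩
    have hyz : y < z := hz.1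
    have hcont : ContinuousOn (fun z => Real.arctan (u z / z)) (Icc y z) := fun w hw =>
      ((hA1 w (lt_of_lt_of_le hy hw.1)).continuousAt).continuousWithinAt
    have hderiv : ∀ w ∈ interior (Icc y z), 0 < deriv (fun z => Real.arctan (u z / z)) w := by
      intro w hw
      rw [interior_Icc] at hw
      have hwpos : 0 < w := hy.trans hw.1
      rw [(hA1 w hwpos).deriv]
      exact hIoo ⟨hw.1, hw.2.trans hz.2⟩
    exact strictMonoOn_of_deriv_pos (convex_Icc y z) hcont hderiv
      (left_mem_Icc.mpr hyz.le) (right_mem_Icc.mpr hyz.le) hyz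
  -- left side
  have hleft : ∀ᶠ z in 𝓝[<] y, Real.arctan (u y / y) < Real.arctan (u z / z) := by
    have hev' : ∀ᶠ z in 𝓝[<] y, α' z < 0 ∧ 0 < z := by
      have h1 := hev.filter_mono (nhdsWithin_mono y (fun z hz => ne_of_lt hz : Iio y ⊆ {y}ᶜ))
      have h2 : ∀ᶠ z in 𝓝[<] y, (0:ℝ) < z :=
        ((eventually_gt_nhds hy).filter_mono nhdsWithin_le_nhds)
      filter_upwards [h1, h2, self_mem_nhdsWithin] with z hz hz0 hz'
      refine ⟨?_, hz0⟩
      rw [slope_def_field, hα'y] at hz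
      have hzy : z - y < 0 := sub_neg.mpr hz'
      rcases div_pos_iff.mp hz with ⟨_, h⟩ | ⟨h, _⟩
      · linarith
      · linarith
    obtain ⟨a, ha, hIoo⟩ := (nhdsLT_basis y).eventually_iff.mp hev'
    rw [(nhdsLT_basis y).eventually_iff]
    refine ⟨a, ha, fun z hz => ?_⟩
    have hyz : z < y := hz.2
    have hz0 : 0 < z := (hIoo hz).2
    have hcont : ContinuousOn (fun z => Real.arctan (u z / z)) (Icc z y) := fun w hw =>
      ((hA1 w (lt_of_lt_of_le hz0 hw.1)).continuousAt).continuousWithinAt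
    have hderiv : ∀ w ∈ interior (Icc z y), deriv (fun z => Real.arctan (u z / z)) w < 0 := by
      intro w hw
      rw [interior_Icc] at hw
      have hwpos : 0 < w := hz0.trans hw.1
      rw [(hA1 w hwpos).deriv]
      exact (hIoo ⟨hz.1.trans hw.1, hw.2⟩).1
    exact strictAntiOn_of_deriv_neg (convex_Icc z y) hcont hderiv
      (left_mem_Icc.mpr hyz.le) (right_mem_Icc.mpr hyz.le) hyz
  rw [← nhdsLT_sup_nhdsGT, eventually_sup]
  exact ⟨hleft, hright⟩
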